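/- Let E be a directed graph. Every admissible pair of E is reflexive if and only if the following three conditions hold: (a) each cycle of E is either without exits or extreme; (b) each infinite emitter of E lies on a cycle; (c) for every infinite path α of E, only finitely many edges e with s(e) ∈ α⁰ satisfy r(e) ∉ R(α⁰). (This is the combinatorial content of the theorem that each graded ideal of the Leavitt path algebra L_K(E) is an annihilator ideal if and only if (a), (b), (c) hold.) -/

import Mathlib

namespace GraphAnn

variable {V E : Type*}

/-- `u ≥ v`: there is a (possibly trivial) path from `u` to `v`. -/
def Reach (s r : E → V) : V → V → Prop :=
  Relation.ReflTransGen (fun a b => ∃ e, s e = a ∧ r e = b)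

/-- The root `R(W)` of a set of vertices. -/
def Root (s r : E → V) (W : Set V) : Set V :=
  {u | ∃ v ∈ W, Reach s r u v}

def Hereditary (s r : E → V) (H : Set V) : Prop :=
  ∀ u v, u ∈ H → Reach s r u v → v ∈ H

def IsSink (s : E → V) (v : V) : Prop := ∀ e : E, s e ≠ v

def IsInfiniteEmitter (s : E → V) (v : V) : Prop := {e : E | s e = v}.Infinite

def IsRegular (s : E → V) (v : V) : Prop := ¬ IsSink s v ∧ ¬ IsInfiniteEmitter s v

def Saturated (s r : E → V) (H : Set V) : Prop :=
  ∀ v, IsRegular s v → (∀ e : E, s e = v → r e ∈ H) → v ∈ H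

/-- `V⊥ = E⁰ − R(V)`. -/
def perp (s r : E → V) (W : Set V) : Set V := {v | v ∉ Root s r W}

/-- Breaking vertices `B_H`. -/
def Breaking (s r : E → V) (H : Set V) : Set V :=
  {v | v ∉ H ∧ IsInfiniteEmitter s v ∧
    {e : E | s e = v ∧ r e ∉ H}.Nonempty ∧ {e : E | s e = v ∧ r e ∉ H}.Finite}

/-- `(H,S)` is an admissible pair. -/
def Admissible (s r : E → V) (H S : Set V) : Prop :=
  Hereditary s r H ∧ Saturated s r H ∧ S ⊆ Breaking s r H

/-- `S⊥ = B_{H⊥} − S`. -/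
def Sperp (s r : E → V) (H S : Set V) : Set V := Breaking s r (perp s r H) \ S

/-- A cycle: a closed path of positive length in which distinct edges have
distinct sources. -/
structure GCycle (s r : E → V) where
  edges : List E
  ne : edges ≠ []
  chain : edges.Chain' (fun e f => r e = s f)
  closed : r (edges.getLast ne) = s (edges.head ne)
  srcNodup : (edges.map s).Nodup

/-- The vertex set `c⁰` of a cycle. -/
def GCycle.verts {s r : E → V} (c : GCycle s r) : Set V :=
  {v | ∃ e ∈ c.edges, s e = v}

/-- A cycle has an exit. -/
def GCycle.HasExit {s r : E → V} (c : GCycle s r) : Prop :=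
  ∃ e, s e ∈ c.verts ∧ e ∉ c.edges

/-- An extreme cycle: it has an exit and every exit returns. -/
def GCycle.Extreme {s r : E → V} (c : GCycle s r) : Prop :=
  c.HasExit ∧ ∀ v ∈ c.verts, ∀ w, Reach s r v w → ∃ u ∈ c.verts, Reach s r w u

/-- The vertex set `α⁰` of an infinite path `α`. -/
def InfPathVerts (s : E → V) (α : ℕ → E) : Set V := {v | ∃ n, s (α n) = v}

/-- Conditions (a), (b), (c): the graph is all-reflexive. -/
def AllReflexiveGraph (s r : E → V) : Prop :=
  (∀ c : GCycle s r, ¬ c.HasExit ∨ c.Extreme) ∧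
  (∀ v, IsInfiniteEmitter s v → ∃ c : GCycle s r, v ∈ c.verts) ∧
  (∀ α : ℕ → E, (∀ n, r (α n) = s (α (n + 1))) →
    {e : E | s e ∈ InfPathVerts s α ∧ r e ∉ Root s r (InfPathVerts s α)}.Finite)

section Aux

variable {s r : E → V}

lemma reach_of_edge {e : E} : Reach s r (s e) (r e) :=
  Relation.ReflTransGen.single ⟨e, rfl, rfl⟩

lemma mem_root_self {W : Set V} {v : V} (h : v ∈ W) : v ∈ Root s r W :=
  ⟨v, h, Relation.ReflTransGen.refl⟩

lemma mem_root_of_reach {W : Set V} {v w : V} (h : Reach s r v w)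
    (hw : w ∈ Root s r W) : v ∈ Root s r W := by
  obtain ⟨x, hx, hwx⟩ := hw
  exact ⟨x, hx, h.trans hwx⟩

lemma perp_hereditary (W : Set V) : Hereditary s r (perp s r W) :=
  fun _ _ hu huv hv => hu (mem_root_of_reach huv hv)

lemma hereditary_subset_perpperp {H : Set V} (hH : Hereditary s r H) :
    H ⊆ perp s r (perp s r H) := by
  intro v hv hcon
  obtain ⟨w, hw, hr⟩ := hcon
  exact hw (mem_root_self (hH v w hv hr))

lemma mem_perpperp_iff {H : Set V} {v : V} :
    v ∈ perp s r (perp s r H) ↔ ∀ w, Reach s r v w → w ∈ Root s r H := by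
  constructor
  · intro h w hw
    by_contra hc
    exact h ⟨w, hc, hw⟩
  · rintro h ⟨w, hw, hr⟩
    exact hw (h w hr)

lemma perp_saturated {W : Set V}
    (hW : ∀ v ∈ W, IsRegular s v → ∃ e, s e = v ∧ r e ∈ Root s r W) :
    Saturated s r (perp s r W) := by
  intro v hreg hall hv
  obtain ⟨w, hwW, hreach⟩ := hv
  rcases hreach.cases_head with heq | ⟨b, ⟨e, hse, hre⟩, _⟩
  · subst heq
    obtain ⟨e, hse, hroot⟩ := hW v hwW hreg
    exact hall e hse hroot
  · rename_i hb
    have : r e ∈ Root s r W := ⟨w, hwW, hre ▸ hb⟩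
    exact hall e hse this

end Aux

/-- A walk from `a` to `b` along a list of edges. -/
def Walk (s r : E → V) (a b : V) : List E → Prop
  | [] => a = b
  | e :: l => s e = a ∧ Walk s r (r e) b l

section Walks

variable {s r : E → V}

lemma reach_iff_walk {a b : V} : Reach s r a b ↔ ∃ l, Walk s r a b l := by
  constructor
  · intro h
    induction h using Relation.ReflTransGen.head_induction_on with
    | refl => exact ⟨[], rfl⟩
    | head step _ ih =>
      obtain ⟨e, hse, hre⟩ := step
      obtain ⟨l, hl⟩ := ih
      exact ⟨e :: l, hse, by rw [hre]; exact hl⟩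
  · rintro ⟨l, hl⟩
    induction l generalizing a with
    | nil => exact hl ▸ Relation.ReflTransGen.refl
    | cons e t ih =>
      obtain ⟨hse, hw⟩ := hl
      exact Relation.ReflTransGen.head ⟨e, hse, rfl⟩ (ih hw)

lemma walk_head {a b : V} {l : List E} (hne : l ≠ []) (h : Walk s r a b l) :
    s (l.head hne) = a := by
  cases l with
  | nil => exact absurd rfl hne
  | cons e t => exact h.1

lemma walk_last {a b : V} {l : List E} (hne : l ≠ []) (h : Walk s r a b l) :
    r (l.getLast hne) = b := by
  induction l generalizing a with
  | nil => exact absurd rfl hne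
  | cons e t ih =>
    obtain ⟨hse, hw⟩ := h
    cases t with
    | nil => exact hw
    | cons f t' => rw [List.getLast_cons (by simp)]; exact ih (by simp) hw

lemma walk_chain' {a b : V} {l : List E} (h : Walk s r a b l) :
    l.Chain' (fun e f => r e = s f) := by
  induction l generalizing a with
  | nil => exact List.isChain_nil
  | cons e t ih =>
    obtain ⟨hse, hw⟩ := h
    cases t with
    | nil => exact List.isChain_singleton e
    | cons f t' =>
      exact List.isChain_cons_cons.2 ⟨(hw.1).symm, ih hw⟩

lemma walk_append {a b : V} {l₁ l₂ : List E} :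
    Walk s r a b (l₁ ++ l₂) ↔ ∃ x, Walk s r a x l₁ ∧ Walk s r x b l₂ := by
  induction l₁ generalizing a with
  | nil =>
    constructor
    · intro h; exact ⟨a, rfl, h⟩
    · rintro ⟨x, hx, h⟩; cases hx; exact h
  | cons e t ih =>
    constructor
    · rintro ⟨hse, hw⟩
      obtain ⟨x, h1, h2⟩ := ih.1 hw
      exact ⟨x, ⟨hse, h1⟩, h2⟩
    · rintro ⟨x, ⟨hse, h1⟩, h2⟩
      exact ⟨hse, ih.2 ⟨x, h1, h2⟩⟩

lemma exists_cycle_of_closed_walk_aux {v : V} :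
    ∀ N (l : List E), l.length ≤ N → l ≠ [] → Walk s r v v l →
      ∃ c : GCycle s r, v ∈ c.verts := by
  intro N
  induction N with
  | zero =>
    intro l hl hne
    cases l with
    | nil => exact absurd rfl hne
    | cons e t => simp at hl
  | succ N ih =>
    intro l hl hne hw
    by_cases hnd : (l.map s).Nodup
    · refine ⟨⟨l, hne, walk_chain' hw, ?_, hnd⟩, ?_⟩
      · rw [walk_last hne hw, walk_head hne hw]
      · exact ⟨l.head hne, List.head_mem hne, walk_head hne hw⟩
    · have hninj : ¬ Function.Injective (l.map s).get := by
        intro hinj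
        exact hnd (List.nodup_iff_injective_get.2 hinj)
      rw [Function.not_injective_iff] at hninj
      obtain ⟨i, j, hij, hne'⟩ := hninj
      have key : ∀ (i j : Fin (l.map s).length), (i : ℕ) < (j : ℕ) →
          (l.map s).get i = (l.map s).get j → ∃ c : GCycle s r, v ∈ c.verts := by
        intro i j hlt heqs
        have hil : (i : ℕ) < l.length := by
          simpa using i.2
        have hjl : (j : ℕ) < l.length := by
          simpa using j.2
        have heqs' : s (l.get ⟨i, hil⟩) = s (l.get ⟨j, hjl⟩) := by
          simpa using heqs
        -- split at i
        have hw1 : Walk s r v v (l.take i ++ l.drop i) := by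
          rw [List.take_append_drop]; exact hw
        obtain ⟨x, hx1, hx2⟩ := walk_append.1 hw1
        have hw2 : Walk s r v v (l.take j ++ l.drop j) := by
          rw [List.take_append_drop]; exact hw
        obtain ⟨y, hy1, hy2⟩ := walk_append.1 hw2
        have hdi : l.drop i ≠ [] := by
          simp only [ne_eq, List.drop_eq_nil_iff]; omega
        have hdj : l.drop j ≠ [] := by
          simp only [ne_eq, List.drop_eq_nil_iff]; omega
        have hxval : x = s (l.get ⟨i, hil⟩) := by
          have := walk_head hdi hx2
          rw [← this]
          congr 1
          rw [List.head_eq_getElem]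
          simp [List.getElem_drop]
        have hyval : y = s (l.get ⟨j, hjl⟩) := by
          have := walk_head hdj hy2
          rw [← this]
          congr 1
          rw [List.head_eq_getElem]
          simp [List.getElem_drop]
        have hxy : x = y := by rw [hxval, hyval, heqs']
        have hw3 : Walk s r v v (l.take i ++ l.drop j) :=
          walk_append.2 ⟨x, hx1, hxy ▸ hy2⟩
        have hlen : (l.take i ++ l.drop j).length ≤ N := by
          rw [List.length_append, List.length_take, List.length_drop]
          omega
        have hne3 : l.take i ++ l.drop j ≠ [] := by
          intro hcon
          rw [List.append_eq_nil_iff] at hcon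
          exact hdj hcon.2
        exact ih _ hlen hne3 hw3
      rcases hne'.lt_or_gt with h | h
      · exact key i j h hij
      · exact key j i h hij.symm

lemma exists_cycle_of_closed_walk {v : V} {l : List E} (hne : l ≠ [])
    (hw : Walk s r v v l) : ∃ c : GCycle s r, v ∈ c.verts :=
  exists_cycle_of_closed_walk_aux l.length l le_rfl hne hw

end Walks

section Cycles

variable {s r : E → V}

lemma GCycle.chain_get (c : GCycle s r) {i : ℕ} (h : i < c.edges.length - 1) :
    r (c.edges.get ⟨i, by omega⟩) = s (c.edges.get ⟨i + 1, by omega⟩) :=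
  List.isChain_iff_getElem.1 c.chain i (by omega)

lemma GCycle.length_pos (c : GCycle s r) : 0 < c.edges.length :=
  List.length_pos_iff.2 c.ne

lemma GCycle.reach_head_get (c : GCycle s r) {i : ℕ} (h : i < c.edges.length) :
    Reach s r (s (c.edges.head c.ne)) (s (c.edges.get ⟨i, h⟩)) := by
  induction i with
  | zero =>
    rw [List.get_mk_zero h]
    exact Relation.ReflTransGen.refl
  | succ i ih =>
    have hi : i < c.edges.length := by omega
    have hstep : Reach s r (s (c.edges.get ⟨i, hi⟩)) (s (c.edges.get ⟨i + 1, h⟩)) := by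
      have := c.chain_get (i := i) (by omega)
      exact this ▸ reach_of_edge
    exact (ih hi).trans hstep

lemma GCycle.reach_get_head (c : GCycle s r) {i : ℕ} (h : i < c.edges.length) :
    Reach s r (s (c.edges.get ⟨i, h⟩)) (s (c.edges.head c.ne)) := by
  have main : ∀ k i (hi : i < c.edges.length), c.edges.length - i ≤ k →
      Reach s r (s (c.edges.get ⟨i, hi⟩)) (s (c.edges.head c.ne)) := by
    intro k
    induction k with
    | zero => intro i hi hk; omega
    | succ k ih =>
      intro i hi hk
      by_cases hlast : i = c.edges.length - 1
      · subst hlast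
        have hcl := c.closed
        rw [List.getLast_eq_getElem] at hcl
        have hcl' : r (c.edges.get ⟨c.edges.length - 1, hi⟩) = s (c.edges.head c.ne) := hcl
        exact hcl' ▸ reach_of_edge
      · have hi1 : i + 1 < c.edges.length := by omega
        have hstep : Reach s r (s (c.edges.get ⟨i, hi⟩)) (s (c.edges.get ⟨i + 1, hi1⟩)) := by
          have := c.chain_get (i := i) (by omega)
          exact this ▸ reach_of_edge
        exact hstep.trans (ih (i + 1) hi1 (by omega))
  exact main c.edges.length i h (by omega)

lemma GCycle.reach_of_mem_verts (c : GCycle s r) {x y : V}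
    (hx : x ∈ c.verts) (hy : y ∈ c.verts) : Reach s r x y := by
  obtain ⟨e, he, hse⟩ := hx
  obtain ⟨f, hf, hsf⟩ := hy
  obtain ⟨⟨i, hi⟩, hie⟩ := List.mem_iff_get.1 he
  obtain ⟨⟨j, hj⟩, hjf⟩ := List.mem_iff_get.1 hf
  subst hie hjf hse hsf
  exact (c.reach_get_head hi).trans (c.reach_head_get hj)

lemma GCycle.r_mem_verts (c : GCycle s r) {e : E} (he : e ∈ c.edges) :
    r e ∈ c.verts := by
  obtain ⟨⟨i, hi⟩, rfl⟩ := List.mem_iff_get.1 he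
  by_cases hlast : i = c.edges.length - 1
  · subst hlast
    have hcl := c.closed
    rw [List.getLast_eq_getElem] at hcl
    have hcl' : r (c.edges.get ⟨c.edges.length - 1, hi⟩) = s (c.edges.head c.ne) := hcl
    rw [hcl']
    exact ⟨c.edges.head c.ne, List.head_mem c.ne, rfl⟩
  · have hi1 : i + 1 < c.edges.length := by omega
    have hch := c.chain_get (i := i) (by omega)
    rw [hch]
    exact ⟨c.edges.get ⟨i + 1, hi1⟩, List.get_mem _ _, rfl⟩

lemma GCycle.noexit_closed (c : GCycle s r) (hne : ¬ c.HasExit) {v w : V}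
    (hv : v ∈ c.verts) (hr : Reach s r v w) : w ∈ c.verts := by
  induction hr with
  | refl => exact hv
  | tail _ step ih =>
    obtain ⟨e, hse, hre⟩ := step
    have heme : e ∈ c.edges := by
      by_contra hmem
      exact hne ⟨e, by rw [hse]; exact ih, hmem⟩
    rw [← hre]
    exact c.r_mem_verts heme

lemma not_on_cycle (ha : ∀ c : GCycle s r, ¬ c.HasExit ∨ c.Extreme)
    {H : Set V} (hH : Hereditary s r H) (c : GCycle s r) {v : V}
    (hv : v ∈ c.verts) (hvH : v ∉ H) (hvR : v ∈ Root s r H) : False := by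
  obtain ⟨h, hhH, hreach⟩ := hvR
  rcases ha c with hnex | hext
  · have h1 : h ∈ c.verts := c.noexit_closed hnex hv hreach
    exact hvH (hH h v hhH (c.reach_of_mem_verts h1 hv))
  · obtain ⟨u, hu, hru⟩ := hext.2 v hv h hreach
    have : u ∈ H := hH h u hhH hru
    exact hvH (hH u v this (c.reach_of_mem_verts hu hv))

lemma breaking_eq_empty (ha : ∀ c : GCycle s r, ¬ c.HasExit ∨ c.Extreme)
    (hb : ∀ v, IsInfiniteEmitter s v → ∃ c : GCycle s r, v ∈ c.verts)
    {H : Set V} (hH : Hereditary s r H) : Breaking s r H = ∅ := by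
  ext u
  simp only [Set.mem_empty_iff_false, iff_false]
  rintro ⟨huH, hinf, _, hfin⟩
  have hdiff : ({e | s e = u} \ {e : E | s e = u ∧ r e ∉ H}).Infinite :=
    hinf.diff hfin
  obtain ⟨e1, he1, he1'⟩ := hdiff.nonempty
  have hre1 : r e1 ∈ H := by
    by_contra hcon
    exact he1' ⟨he1, hcon⟩
  obtain ⟨c, hc⟩ := hb u hinf
  have hdiff2 : ({e | s e = u} \ {e | e ∈ c.edges}).Infinite :=
    hinf.diff c.edges.finite_toSet
  obtain ⟨e2, he2, he2'⟩ := hdiff2.nonempty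
  have hex : c.HasExit := ⟨e2, by rw [he2]; exact hc, he2'⟩
  rcases ha c with hnex | hext
  · exact hnex hex
  · obtain ⟨z, hz, hrz⟩ := hext.2 u hc (r e1) (he1 ▸ reach_of_edge)
    have hzH : z ∈ H := hH (r e1) z hre1 hrz
    exact huH (hH z u hzH (c.reach_of_mem_verts hz hc))

end Cycles

/-- `StepsTo n v`: there is a path of length `n` from `v` into `H`. -/
def StepsTo (s r : E → V) (H : Set V) : ℕ → V → Prop
  | 0, v => v ∈ H
  | n + 1, v => ∃ e, s e = v ∧ StepsTo s r H n (r e)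

/-- Distance to `H` (junk value `0` if unreachable). -/
noncomputable def dH (s r : E → V) (H : Set V) (v : V) : ℕ :=
  sInf {n | StepsTo s r H n v}

section Backward

variable {s r : E → V}

lemma stepsTo_of_root {H : Set V} {v : V} (h : v ∈ Root s r H) :
    ∃ n, StepsTo s r H n v := by
  obtain ⟨w, hw, hrw⟩ := h
  induction hrw using Relation.ReflTransGen.head_induction_on with
  | refl => exact ⟨0, hw⟩
  | head step _ ih =>
    obtain ⟨e, hse, hre⟩ := step
    obtain ⟨n, hn⟩ := ih
    exact ⟨n + 1, e, hse, by rw [hre]; exact hn⟩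

lemma dH_le {H : Set V} {v : V} {n : ℕ} (h : StepsTo s r H n v) :
    dH s r H v ≤ n := Nat.sInf_le h

lemma dH_spec {H : Set V} {v : V} (h : ∃ n, StepsTo s r H n v) :
    StepsTo s r H (dH s r H v) v := Nat.sInf_mem h

lemma perpperp_subset (ha : ∀ c : GCycle s r, ¬ c.HasExit ∨ c.Extreme)
    (hb : ∀ v, IsInfiniteEmitter s v → ∃ c : GCycle s r, v ∈ c.verts)
    (hcnd : ∀ α : ℕ → E, (∀ n, r (α n) = s (α (n + 1))) →
      {e : E | s e ∈ InfPathVerts s α ∧ r e ∉ Root s r (InfPathVerts s α)}.Finite)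
    {H : Set V} (hher : Hereditary s r H) (hsat : Saturated s r H) :
    perp s r (perp s r H) ⊆ H := by
  intro u huP
  by_contra huH
  set M : Set V := perp s r (perp s r H) \ H with hMdef
  have huM : u ∈ M := ⟨huP, huH⟩
  have hMroot : ∀ v ∈ M, v ∈ Root s r H :=
    fun v hv => (mem_perpperp_iff.1 hv.1) v Relation.ReflTransGen.refl
  have hMnotinf : ∀ v ∈ M, ¬ IsInfiniteEmitter s v := by
    intro v hv hinf
    obtain ⟨c, hc⟩ := hb v hinf
    exact not_on_cycle ha hher c hc hv.2 (hMroot v hv)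
  have hMnotsink : ∀ v ∈ M, ¬ IsSink s v := by
    intro v hv hsink
    obtain ⟨w, hw, hrw⟩ := hMroot v hv
    rcases hrw.cases_head with heq | ⟨b, ⟨e, hse, _⟩, _⟩
    · exact hv.2 (heq ▸ hw)
    · exact hsink e hse
  have hMstep : ∀ v ∈ M, ∃ e, s e = v ∧ r e ∈ M := by
    intro v hv
    have hnall : ¬ ∀ e, s e = v → r e ∈ H :=
      fun hall => hv.2 (hsat v ⟨hMnotsink v hv, hMnotinf v hv⟩ hall)
    push_neg at hnall
    obtain ⟨e, hse, hre⟩ := hnall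
    refine ⟨e, hse, ⟨perp_hereditary _ v (r e) hv.1 (hse ▸ reach_of_edge), hre⟩⟩
  have hd1 : ∀ v ∈ M, 1 ≤ dH s r H v := by
    intro v hv
    rcases Nat.eq_zero_or_pos (dH s r H v) with h0 | h1
    · have := dH_spec (stepsTo_of_root (hMroot v hv))
      rw [h0] at this
      exact absurd this hv.2
    · exact h1
  have hstep2 : ∀ v ∈ M, ∃ e, s e = v ∧ r e ∈ M ∧
      (1 < dH s r H v → dH s r H (r e) < dH s r H v) := by
    intro v hv
    by_cases h1 : dH s r H v = 1
    · obtain ⟨e, hse, hre⟩ := hMstep v hv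
      exact ⟨e, hse, hre, by omega⟩
    · have hge : 1 < dH s r H v := lt_of_le_of_ne (hd1 v hv) (Ne.symm h1)
      have hspec := dH_spec (stepsTo_of_root (hMroot v hv))
      obtain ⟨k, hk⟩ : ∃ k, dH s r H v = k + 1 := ⟨dH s r H v - 1, by omega⟩
      rw [hk] at hspec
      obtain ⟨e, hse, hke⟩ := hspec
      have hreH : r e ∉ H := by
        intro hcon
        have : StepsTo s r H 1 v := ⟨e, hse, hcon⟩
        have := dH_le this
        omega
      have hreM : r e ∈ M :=
        ⟨perp_hereditary _ v (r e) hv.1 (hse ▸ reach_of_edge), hreH⟩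
      exact ⟨e, hse, hreM, fun _ => by
        have := dH_le hke
        omega⟩
  -- choose step edges
  have hchoice : ∀ v : {x : V // x ∈ M}, ∃ e, s e = v.1 ∧ r e ∈ M ∧
      (1 < dH s r H v.1 → dH s r H (r e) < dH s r H v.1) :=
    fun v => hstep2 v.1 v.2
  choose g hg1 hg2 hg3 using hchoice
  -- build the infinite path
  let f : ℕ → {x : V // x ∈ M} := fun n =>
    Nat.rec ⟨u, huM⟩ (fun _ p => ⟨r (g p), hg2 p⟩) n
  let α : ℕ → E := fun n => g (f n)
  have hfs : ∀ n, s (α n) = (f n).1 := fun n => hg1 (f n)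
  have hfr : ∀ n, r (α n) = (f (n + 1)).1 := fun _ => rfl
  have hchain : ∀ n, r (α n) = s (α (n + 1)) := by
    intro n
    rw [hfr n]
    exact (hfs (n + 1)).symm
  -- injectivity of vertices
  have hkey : ∀ m n, m < n → (f m).1 = (f n).1 → False := by
    intro m n hmn heq
    have hwalkgen : ∀ k, Walk s r (s (α m)) (s (α (m + k)))
        ((List.range k).map fun i => α (m + i)) := by
      intro k
      induction k with
      | zero => rfl
      | succ k ih =>
        rw [List.range_succ, List.map_append]
        refine walk_append.2 ⟨s (α (m + k)), ih, ?_⟩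
        exact ⟨rfl, (hchain (m + k)).symm ▸ rfl⟩
    have hw := hwalkgen (n - m)
    rw [show m + (n - m) = n by omega] at hw
    rw [hfs m, hfs n, ← heq] at hw
    have hne : ((List.range (n - m)).map fun i => α (m + i)) ≠ [] := by
      simp only [ne_eq, List.map_eq_nil_iff, List.range_eq_nil]
      omega
    obtain ⟨c, hc⟩ := exists_cycle_of_closed_walk hne hw
    exact not_on_cycle ha hher c hc (f m).2.2 (hMroot _ (f m).2)
  have hinj : Function.Injective fun n => (f n).1 := by
    intro m n hmn
    by_contra hne
    rcases Ne.lt_or_gt hne with h | h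
    · exact hkey m n h hmn
    · exact hkey n m h hmn.symm
  -- the path hits distance-1 vertices infinitely often
  have hhits : ∀ n, ∃ m, n ≤ m ∧ dH s r H (f m).1 = 1 := by
    have main : ∀ k n, dH s r H (f n).1 ≤ k → ∃ m, n ≤ m ∧ dH s r H (f m).1 = 1 := by
      intro k
      induction k with
      | zero =>
        intro n h0
        have := hd1 (f n).1 (f n).2
        omega
      | succ k ih =>
        intro n hk
        by_cases h : dH s r H (f n).1 = 1
        · exact ⟨n, le_refl n, h⟩
        · have hlt : 1 < dH s r H (f n).1 :=
            lt_of_le_of_ne (hd1 (f n).1 (f n).2) (Ne.symm h)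
          have hdec := hg3 (f n) hlt
          have : dH s r H (f (n + 1)).1 ≤ k := by
            have : r (g (f n)) = (f (n + 1)).1 := rfl
            rw [← this]
            omega
          obtain ⟨m, hm, h1⟩ := ih (n + 1) this
          exact ⟨m, by omega, h1⟩
    intro n
    exact main (dH s r H (f n).1) n le_rfl
  -- and then emits edges into H, contradicting condition (c)
  have hF := hcnd α hchain
  set A : Set V := InfPathVerts s α with hA
  have hedge : ∀ n, dH s r H (f n).1 = 1 →
      ∃ e, s e = (f n).1 ∧ r e ∈ H := by
    intro n h1
    have := dH_spec (stepsTo_of_root (hMroot (f n).1 (f n).2))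
    rw [h1] at this
    exact this
  have hHdisj : ∀ x ∈ H, x ∉ Root s r A := by
    rintro x hx ⟨z, ⟨k, hk⟩, hrz⟩
    have : z ∈ H := hher x z hx hrz
    rw [← hk] at this
    rw [hfs k] at this
    exact (f k).2.2 this
  set D : Set ℕ := {n | dH s r H (f n).1 = 1} with hD
  have hDinf : D.Infinite := by
    apply Set.infinite_of_not_bddAbove
    rintro ⟨b, hb'⟩
    obtain ⟨m, hm, h1⟩ := hhits (b + 1)
    have : m ≤ b := hb' (show m ∈ D from h1)
    omega
  choose eD heD1 heD2 using fun n (h : n ∈ D) => hedge n h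
  have hsub : (fun nn : D => eD nn.1 nn.2) '' Set.univ ⊆
      {e : E | s e ∈ A ∧ r e ∉ Root s r A} := by
    rintro e ⟨⟨n, hn⟩, _, rfl⟩
    refine ⟨⟨n, ?_⟩, ?_⟩
    · rw [heD1 n hn, hfs n]
    · intro hcon
      exact hHdisj _ (heD2 n hn) hcon
  have hinj2 : Function.Injective fun nn : D => eD nn.1 nn.2 := by
    rintro ⟨m, hm⟩ ⟨n, hn⟩ heq
    have h2 : s (eD m hm) = s (eD n hn) := congrArg s heq
    rw [heD1 m hm, heD1 n hn] at h2
    exact Subtype.ext (hinj h2)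
  have hinfD : ((fun nn : D => eD nn.1 nn.2) '' Set.univ).Infinite := by
    have h1 : (Set.univ : Set D).Infinite :=
      Set.infinite_univ_iff.mpr (Set.infinite_coe_iff.mpr hDinf)
    exact h1.image (Function.Injective.injOn hinj2)
  exact hinfD (hF.subset hsub)

end Backward




/-- Every admissible pair of `E` is reflexive iff `E` satisfies: (a) each cycle
is without exits or extreme, (b) each infinite emitter is on a cycle, and
(c) each infinite path has only finitely many bifurcations with ranges outside
the root of its vertex set. -/
theorem all_reflexive_characterization (s r : E → V) :
    (∀ H S : Set V, Admissible s r H S →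
        H = perp s r (perp s r H) ∧
          S = Sperp s r (perp s r H) (Sperp s r H S)) ↔
      AllReflexiveGraph s r := by
  constructor
  · intro hrefl
    have hA : ∀ c : GCycle s r, ¬ c.HasExit ∨ c.Extreme := by
      intro c
      by_contra hcon
      push_neg at hcon
      obtain ⟨hex, hnext⟩ := hcon
      have hfail : ∃ v ∈ c.verts, ∃ w, Reach s r v w ∧ ∀ u ∈ c.verts, ¬ Reach s r w u := by
        by_contra hall
        push_neg at hall
        exact hnext ⟨hex, hall⟩
      obtain ⟨v₀, hv₀, w, hvw, hwno⟩ := hfail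
      set H := perp s r c.verts with hH
      have hsat : Saturated s r H := perp_saturated (fun v hv _ => by
        obtain ⟨e, he, hse⟩ := hv
        exact ⟨e, hse, mem_root_self (c.r_mem_verts he)⟩)
      have heq := (hrefl H ∅ ⟨perp_hereditary _, hsat, Set.empty_subset _⟩).1
      have hwH : w ∈ H := by
        intro hcon2
        obtain ⟨z, hz, hwz⟩ := hcon2
        exact hwno z hz hwz
      have hv₀pp : v₀ ∈ perp s r (perp s r H) := by
        rw [mem_perpperp_iff]
        intro x hx
        by_cases hxr : x ∈ Root s r c.verts
        · obtain ⟨z, hz, hxz⟩ := hxr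
          exact ⟨w, hwH, hxz.trans ((c.reach_of_mem_verts hz hv₀).trans hvw)⟩
        · exact mem_root_self hxr
      rw [← heq] at hv₀pp
      exact hv₀pp (mem_root_self hv₀)
    have hB : ∀ v, IsInfiniteEmitter s v → ∃ c : GCycle s r, v ∈ c.verts := by
      intro v hv
      by_contra hno
      push_neg at hno
      set H := perp s r ({v} : Set V) with hH
      have hsat : Saturated s r H := perp_saturated (fun x hx hreg => by
        rw [Set.mem_singleton_iff] at hx
        subst hx
        exact absurd hv hreg.2)
      have heq := (hrefl H ∅ ⟨perp_hereditary _, hsat, Set.empty_subset _⟩).1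
      have hedges : ∀ e, s e = v → r e ∈ H := by
        intro e hse hcon2
        obtain ⟨z, hz, hrz⟩ := hcon2
        rw [Set.mem_singleton_iff] at hz
        rw [hz] at hrz
        obtain ⟨l, hl⟩ := reach_iff_walk.1 hrz
        have hwalk : Walk s r v v (e :: l) := ⟨hse, hl⟩
        obtain ⟨c, hc⟩ := exists_cycle_of_closed_walk (List.cons_ne_nil e l) hwalk
        exact hno c hc
      have hvpp : v ∈ perp s r (perp s r H) := by
        rw [mem_perpperp_iff]
        intro x hx
        rcases hx.cases_head with heqx | ⟨b, ⟨e, hse, hre⟩, hbx⟩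
        · obtain ⟨e, he⟩ := hv.nonempty
          exact ⟨r e, hedges e he, by rw [← heqx, ← he]; exact reach_of_edge⟩
        · have hbH : b ∈ H := hre ▸ hedges e hse
          exact mem_root_self (perp_hereditary _ b x hbH hbx)
      rw [← heq] at hvpp
      exact hvpp (mem_root_self (Set.mem_singleton v))
    refine ⟨hA, hB, ?_⟩
    intro α hchain
    by_contra hFin
    have hInf : {e : E | s e ∈ InfPathVerts s α ∧
        r e ∉ Root s r (InfPathVerts s α)}.Infinite := hFin
    set A := InfPathVerts s α with hAdef
    set H := perp s r A with hH
    have hsat : Saturated s r H := perp_saturated (fun x hx _ => by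
      obtain ⟨n, hn⟩ := hx
      exact ⟨α n, hn, mem_root_self ⟨n + 1, (hchain n).symm⟩⟩)
    have hFu : ∀ u ∈ A, ¬ ({e : E | s e = u ∧ r e ∉ Root s r A}).Infinite := by
      intro u hu hinf
      have huinf : IsInfiniteEmitter s u := hinf.mono (fun e he => he.1)
      obtain ⟨c, hc⟩ := hB u huinf
      obtain ⟨e, ⟨hse, hre⟩, hnc⟩ := (hinf.diff c.edges.finite_toSet).nonempty
      have hexc : c.HasExit := ⟨e, by rw [hse]; exact hc, hnc⟩
      rcases hA c with h | hext
      · exact h hexc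
      · obtain ⟨z, hz, hrz⟩ := hext.2 u hc (r e) (hse ▸ reach_of_edge)
        exact hre (mem_root_of_reach hrz
          (mem_root_of_reach (c.reach_of_mem_verts hz hc) (mem_root_self hu)))
    set U := {u | u ∈ A ∧ ∃ e, s e = u ∧ r e ∉ Root s r A} with hU
    have hUinf : U.Infinite := by
      intro hUfin
      apply hInf
      have hsub : {e : E | s e ∈ A ∧ r e ∉ Root s r A} ⊆
          ⋃ u ∈ U, {e : E | s e = u ∧ r e ∉ Root s r A} := by
        rintro e ⟨h1, h2⟩
        exact Set.mem_biUnion ⟨h1, e, rfl, h2⟩ ⟨rfl, h2⟩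
      refine Set.Finite.subset (hUfin.biUnion (fun u hu => ?_)) hsub
      have := hFu u hu.1
      rwa [Set.not_infinite] at this
    have hpos : ∀ n, ∃ m, n ≤ m ∧ s (α m) ∈ U := by
      intro n
      by_contra hcon
      push_neg at hcon
      apply hUinf
      have hsub : U ⊆ (fun k => s (α k)) '' (Set.Iio n) := by
        intro u hu
        obtain ⟨k, hk⟩ := hu.1
        rcases lt_or_ge k n with hkn | hkn
        · exact ⟨k, hkn, hk⟩
        · have : s (α k) ∈ U := by rw [hk]; exact hu
          exact absurd this (hcon k hkn)
      exact Set.Finite.subset ((Set.finite_Iio n).image _) hsub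
    have hreach_along : ∀ k m, k ≤ m → Reach s r (s (α k)) (s (α m)) := by
      intro k m hkm
      induction hkm with
      | refl => exact Relation.ReflTransGen.refl
      | @step m' h ih =>
        exact ih.trans ((hchain m') ▸ reach_of_edge)
    have hroot : ∀ x, x ∈ Root s r H := by
      intro x
      by_cases hx : x ∈ Root s r A
      · obtain ⟨z, ⟨k, hk⟩, hxz⟩ := hx
        obtain ⟨m, hm, hmU⟩ := hpos k
        obtain ⟨_, e, hse, hre⟩ := hmU
        exact ⟨r e, hre, hxz.trans ((hk ▸ hreach_along k m hm).trans (hse ▸ reach_of_edge))⟩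
      · exact mem_root_self hx
    have heq := (hrefl H ∅ ⟨perp_hereditary _, hsat, Set.empty_subset _⟩).1
    have h0 : s (α 0) ∈ perp s r (perp s r H) := by
      rw [mem_perpperp_iff]
      intro w _
      exact hroot w
    rw [← heq] at h0
    exact h0 (mem_root_self ⟨0, rfl⟩)
  · intro hAll H S hadm
    obtain ⟨hA, hB, hC⟩ := hAll
    obtain ⟨hher, hsat, hSB⟩ := hadm
    have hBe : Breaking s r H = ∅ := breaking_eq_empty hA hB hher
    have hS : S = ∅ := by
      rw [hBe] at hSB
      exact Set.subset_eq_empty hSB rfl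
    have hHeq : H = perp s r (perp s r H) :=
      Set.Subset.antisymm (hereditary_subset_perpperp hher)
        (perpperp_subset hA hB hC hher hsat)
    refine ⟨hHeq, ?_⟩
    rw [hS]
    unfold Sperp
    rw [breaking_eq_empty hA hB (perp_hereditary (perp s r H))]
    exact (Set.empty_diff _).symm

end GraphAnn
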